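/- Let Z be a compact metrizable space of covering dimension n with an action of a finite group F by homeomorphisms. Let U be a finite collection of open Fin-subsets of Z such that gU ∈ U for all g ∈ F, U ∈ U. Suppose for each U ∈ U an open subset U'' ⊆ U is given with closure(U'') ⊆ U. Put m = (n+1)·|F|. Then for each U ∈ U one can find an open subset U' ⊆ Z such that: (1) U'' ⊆ closure(U'') ⊆ U' ⊆ closure(U') ⊆ U; (2) whenever U₀ ⊆ U has more than m elements, the intersection of the boundaries ∂U' over U ∈ U₀ is empty; (3) (gU)' = g(U') for all g ∈ F, U ∈ U. -/

import Mathlib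

open Pointwise

def IsFinSubset (G : Type*) {X : Type*} [Group G] [MulAction G X] (B : Set X) : Prop :=
  {g : G | g • B = B}.Finite ∧ ∀ g : G, ((g • B) ∩ B).Nonempty → g • B = B

def dimLE {X : Type*} (U : Set (Set X)) (N : ℕ) : Prop :=
  ∀ x : X, {V | V ∈ U ∧ x ∈ V}.Finite ∧ {V | V ∈ U ∧ x ∈ V}.ncard ≤ N + 1

def coveringDimLE (X : Type*) [TopologicalSpace X] (n : ℕ) : Prop :=
  ∀ U : Set (Set X), (∀ V ∈ U, IsOpen V) → ⋃₀ U = Set.univ →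
    ∃ W : Set (Set X), (∀ V ∈ W, IsOpen V) ∧ ⋃₀ W = Set.univ ∧
      (∀ V ∈ W, ∃ V' ∈ U, V ⊆ V') ∧ dimLE W n

set_option maxHeartbeats 1000000

open Pointwise MeasureTheory

noncomputable def genInd {α : Type*} (S : α → α → Prop) (R : α) (y : α → ℝ) (W : α) : ℝ :=
  Set.indicator {W' | S W' R} y W

lemma genInd_eq {α : Type*} (S : α → α → Prop) (R : α) (y : α → ℝ) (W : α) [Decidable (S W R)] :
    genInd S R y W = if S W R then y W else 0 := by
  unfold genInd
  rw [Set.indicator_apply]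
  congr 1

lemma exists_generic_levels {α : Type*} (𝒲 ℛ : Finset α) (S : α → α → Prop) (n : ℕ) :
    ∃ t : α → ℝ, (∀ R ∈ ℛ, t R ∈ Set.Ioo (0:ℝ) 1) ∧
      ∀ I P : Finset α, I ⊆ ℛ → I.card = n + 2 → P ⊆ 𝒲 → P.card ≤ n + 1 →
        ∀ y : α → ℝ, (∑ W ∈ P, y W) = 1 →
          ∃ R ∈ I, (∑ W ∈ P, genInd S R y W) ≠ t R := by
  classical
  have key : ∀ I P : Finset α, I ⊆ ℛ → I.card = n + 2 → P.card ≤ n + 1 →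
      volume {τ : {x // x ∈ ℛ} → ℝ | ∃ y : α → ℝ, (∑ W ∈ P, y W) = 1 ∧
        ∀ R : {x // x ∈ ℛ}, R.1 ∈ I → (∑ W ∈ P, genInd S R.1 y W) = τ R} = 0 := by
    intro I P hIR hIcard hPcard
    rcases P.eq_empty_or_nonempty with rfl | ⟨p₀, hp₀⟩
    · have : {τ : {x // x ∈ ℛ} → ℝ | ∃ y : α → ℝ, (∑ W ∈ (∅ : Finset α), y W) = 1 ∧
        ∀ R : {x // x ∈ ℛ}, R.1 ∈ I → (∑ W ∈ (∅ : Finset α), genInd S R.1 y W) = τ R} = ∅ := by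
        ext τ
        simp only [Finset.sum_empty, Set.mem_setOf_eq, Set.mem_empty_iff_false, iff_false]
        rintro ⟨y, h1, -⟩
        exact one_ne_zero h1.symm
      rw [this]
      exact measure_empty
    set d : α → ({x // x ∈ I} → ℝ) := fun W R => genInd S R.1 (fun _ => (1:ℝ)) W -
        genInd S R.1 (fun _ => (1:ℝ)) p₀ with hd
    set π : ({x // x ∈ ℛ} → ℝ) →ₗ[ℝ] ({x // x ∈ I} → ℝ) :=
      LinearMap.funLeft ℝ ℝ (fun R : {x // x ∈ I} => (⟨R.1, hIR R.2⟩ : {x // x ∈ ℛ})) with hπ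
    set Wsub : Submodule ℝ ({x // x ∈ I} → ℝ) := Submodule.span ℝ ↑(P.image d) with hWsub
    have hfr : Module.finrank ℝ Wsub ≤ n + 1 := by
      refine le_trans (finrank_span_finset_le_card (P.image d)) ?_
      exact le_trans (Finset.card_image_le) hPcard
    have htop : Wsub ≠ ⊤ := by
      intro h
      have h1 : Module.finrank ℝ ({x // x ∈ I} → ℝ) = n + 2 := by
        rw [Module.finrank_pi, Fintype.card_coe, hIcard]
      have h2 : Module.finrank ℝ Wsub = Module.finrank ℝ ({x // x ∈ I} → ℝ) := by
        rw [h]; exact finrank_top ℝ _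
      omega
    obtain ⟨w, hw⟩ : ∃ w, w ∉ Wsub := by
      by_contra h
      push_neg at h
      exact htop (Submodule.eq_top_iff'.mpr h)
    set W' : Submodule ℝ ({x // x ∈ ℛ} → ℝ) := Wsub.comap π with hW'
    have hW'top : W' ≠ ⊤ := by
      intro h
      set uw : {x // x ∈ ℛ} → ℝ := fun Rr => if hh : Rr.1 ∈ I then w ⟨Rr.1, hh⟩ else 0 with huw
      have heq : π uw = w := by
        funext R
        have h0 : (π uw) R = uw ⟨R.1, hIR R.2⟩ := rfl
        rw [h0]
        simp only [huw]
        rw [dif_pos R.2]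
      have huwW : uw ∈ W' := by rw [h]; trivial
      rw [hW', Submodule.mem_comap, heq] at huwW
      exact hw huwW
    set u₀ : {x // x ∈ ℛ} → ℝ := fun Rr => genInd S Rr.1 (fun _ => (1:ℝ)) p₀ with hu₀
    have hsub : {τ : {x // x ∈ ℛ} → ℝ | ∃ y : α → ℝ, (∑ W ∈ P, y W) = 1 ∧
        ∀ R : {x // x ∈ ℛ}, R.1 ∈ I → (∑ W ∈ P, genInd S R.1 y W) = τ R}
        ⊆ (fun τ => -u₀ + τ) ⁻¹' (W' : Set ({x // x ∈ ℛ} → ℝ)) := by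
      rintro τ ⟨y, hy1, hy2⟩
      simp only [Set.mem_preimage, SetLike.mem_coe, hW', Submodule.mem_comap]
      have hπτ : π (-u₀ + τ) = ∑ W ∈ P, y W • d W := by
        funext R
        have h1 : (π (-u₀ + τ)) R = -(u₀ ⟨R.1, hIR R.2⟩) + τ ⟨R.1, hIR R.2⟩ := rfl
        rw [h1]
        have h2 : τ ⟨R.1, hIR R.2⟩ = ∑ W ∈ P, genInd S R.1 y W :=
          (hy2 ⟨R.1, hIR R.2⟩ R.2).symm
        rw [h2]
        have h3 : (∑ W ∈ P, y W • d W) R = ∑ W ∈ P, y W * d W R := by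
          rw [Finset.sum_apply]; rfl
        rw [h3]
        have h4 : ∀ W, y W * d W R =
            genInd S R.1 y W - y W * genInd S R.1 (fun _ => (1:ℝ)) p₀ := by
          intro W
          rw [hd]
          simp only [genInd_eq]
          split_ifs <;> ring
        rw [Finset.sum_congr rfl (fun W _ => h4 W), Finset.sum_sub_distrib, ← Finset.sum_mul, hy1,
          one_mul]
        have h5 : u₀ ⟨R.1, hIR R.2⟩ = genInd S R.1 (fun _ => (1:ℝ)) p₀ := rfl
        rw [h5]
        ring
      rw [hπτ]
      refine Submodule.sum_smul_mem _ _ (fun W hW => ?_)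
      exact Submodule.subset_span (by simpa using Finset.mem_image_of_mem d hW)
    refine measure_mono_null hsub ?_
    rw [measure_preimage_add]
    exact Measure.addHaar_submodule volume W' hW'top
  set box : Set ({x // x ∈ ℛ} → ℝ) := Set.univ.pi fun _ => Set.Ioo (0:ℝ) 1 with hbox
  have hboxvol : volume box = 1 := by
    rw [hbox, volume_pi_pi]
    simp [Real.volume_Ioo]
  set BadAll : Set ({x // x ∈ ℛ} → ℝ) := ⋃ I ∈ ℛ.powersetCard (n+2), ⋃ P ∈ 𝒲.powerset.filter (fun P => P.card ≤ n+1),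
      {τ : {x // x ∈ ℛ} → ℝ | ∃ y : α → ℝ, (∑ W ∈ P, y W) = 1 ∧
        ∀ R : {x // x ∈ ℛ}, R.1 ∈ I → (∑ W ∈ P, genInd S R.1 y W) = τ R} with hBadAll
  have hBadnull : volume BadAll = 0 := by
    rw [hBadAll]
    refine le_antisymm (le_trans (measure_biUnion_finset_le _ _) (le_of_eq ?_)) zero_le
    refine Finset.sum_eq_zero (fun I hI => ?_)
    refine le_antisymm (le_trans (measure_biUnion_finset_le _ _) (le_of_eq ?_)) zero_le
    refine Finset.sum_eq_zero (fun P hP => ?_)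
    rw [Finset.mem_powersetCard] at hI
    rw [Finset.mem_filter] at hP
    exact key I P hI.1 hI.2 hP.2
  obtain ⟨τ, hτ⟩ : (box \ BadAll).Nonempty := by
    refine nonempty_of_measure_ne_zero (μ := volume) ?_
    rw [measure_diff_null hBadnull, hboxvol]
    exact one_ne_zero
  refine ⟨fun R => if h : R ∈ ℛ then τ ⟨R, h⟩ else 1/2, ?_, ?_⟩
  · intro R hR
    dsimp only
    rw [dif_pos hR]
    exact hτ.1 ⟨R, hR⟩ (Set.mem_univ _)
  · intro I P hIR hIcard hPW hPcard y hy
    by_contra h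
    push_neg at h
    apply hτ.2
    rw [hBadAll]
    refine Set.mem_biUnion (Finset.mem_coe.mpr (Finset.mem_powersetCard.mpr ⟨hIR, hIcard⟩)) ?_
    refine Set.mem_biUnion (Finset.mem_coe.mpr
      (Finset.mem_filter.mpr ⟨Finset.mem_powerset.mpr hPW, hPcard⟩)) ?_
    refine ⟨y, hy, fun R hRI => ?_⟩
    have h6 := h R.1 hRI
    rw [dif_pos R.2] at h6
    exact h6
open Pointwise

open Classical in
noncomputable def orbRep (F : Type*) [Group F] {β : Type*} [MulAction F β] (U : β) : β :=
  if h : (Set.range fun g : F => g • U).Nonempty then h.choose else U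

lemma orbRep_exists (F : Type*) [Group F] {β : Type*} [MulAction F β] (U : β) :
    ∃ g : F, g • U = orbRep F U := by
  classical
  unfold orbRep
  rw [dif_pos ⟨(1 : F) • U, ⟨1, rfl⟩⟩]
  exact (⟨(1 : F) • U, ⟨1, rfl⟩⟩ : (Set.range fun g : F => g • U).Nonempty).choose_spec

lemma orbRep_smul (F : Type*) [Group F] {β : Type*} [MulAction F β] (g : F) (U : β) :
    orbRep F (g • U) = orbRep F U := by
  have hset : (Set.range fun h : F => h • (g • U)) = (Set.range fun h : F => h • U) := by
    ext x
    constructor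
    · rintro ⟨h, rfl⟩
      exact ⟨h * g, by simp [mul_smul]⟩
    · rintro ⟨h, rfl⟩
      refine ⟨h * g⁻¹, ?_⟩
      simp [mul_smul]
  classical
  unfold orbRep
  rw [hset]
  rw [dif_pos ⟨(1 : F) • U, ⟨1, rfl⟩⟩, dif_pos ⟨(1 : F) • U, ⟨1, rfl⟩⟩]

lemma iUnion_mul_right {F : Type*} [Group F] {Z : Type*} (T : F → Set Z) (k : F) :
    (⋃ g : F, T (g * k)) = ⋃ g : F, T g := by
  ext x
  simp only [Set.mem_iUnion]
  constructor
  · rintro ⟨g, hg⟩; exact ⟨g * k, hg⟩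
  · rintro ⟨g, hg⟩; exact ⟨g * k⁻¹, by simpa [inv_mul_cancel_right] using hg⟩

lemma iUnion_mul_left {F : Type*} [Group F] {Z : Type*} (T : F → Set Z) (k : F) :
    (⋃ g : F, T (k * g)) = ⋃ g : F, T g := by
  ext x
  simp only [Set.mem_iUnion]
  constructor
  · rintro ⟨g, hg⟩; exact ⟨k * g, hg⟩
  · rintro ⟨g, hg⟩; exact ⟨k⁻¹ * g, by simpa [mul_inv_cancel_left] using hg⟩

open Classical in
noncomputable def pou {Z : Type*} [MetricSpace Z] (W : Set Z) (x : Z) : ℝ :=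
  if (Wᶜ : Set Z) = ∅ then 1 else Metric.infDist x Wᶜ

lemma pou_continuous {Z : Type*} [MetricSpace Z] (W : Set Z) : Continuous (pou W) := by
  classical
  unfold pou
  split_ifs with h
  · exact continuous_const
  · exact Metric.continuous_infDist_pt _

lemma pou_nonneg {Z : Type*} [MetricSpace Z] {W : Set Z} {x : Z} : 0 ≤ pou W x := by
  classical
  unfold pou
  split_ifs with h
  · norm_num
  · exact Metric.infDist_nonneg

lemma pou_pos {Z : Type*} [MetricSpace Z] {W : Set Z} {x : Z} (hW : IsOpen W) (hx : x ∈ W) :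
    0 < pou W x := by
  classical
  unfold pou
  split_ifs with h
  · norm_num
  · refine (IsClosed.notMem_iff_infDist_pos hW.isClosed_compl
      (Set.nonempty_iff_ne_empty.mpr h)).mp ?_
    simpa using hx

lemma pou_eq_zero {Z : Type*} [MetricSpace Z] {W : Set Z} {x : Z} (hx : x ∉ W) : pou W x = 0 := by
  classical
  unfold pou
  split_ifs with h
  · exact absurd (Set.compl_empty_iff.mp h ▸ Set.mem_univ x) hx
  · exact Metric.infDist_zero_of_mem (by simpa using hx)

lemma ind_mem {α : Type*} (C : α → Prop) (f : α → ℝ) {W : α} (h : C W) :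
    Set.indicator {W' | C W'} f W = f W :=
  Set.indicator_of_mem (show W ∈ {W' | C W'} from h) f

lemma ind_not_mem {α : Type*} (C : α → Prop) (f : α → ℝ) {W : α} (h : ¬ C W) :
    Set.indicator {W' | C W'} f W = 0 :=
  Set.indicator_of_notMem (show W ∉ {W' | C W'} from h) f
/-- Proposition 3.2 (general position in metric spaces): given a finite `F`-invariant
collection `𝒰` of open `Fin`-subsets of a compact metrizable `Z` of covering dimension
`n` and inner approximations `U''`, one finds equivariant intermediate open sets `U'`
whose boundaries are in general position: any more than `m = (n+1)·|F|` of the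
boundaries `∂U'` have empty intersection. -/
theorem general_position_for_subsets
    (Z : Type*) [TopologicalSpace Z] [CompactSpace Z] [TopologicalSpace.MetrizableSpace Z]
    (n : ℕ) (hdim : coveringDimLE Z n)
    (F : Type*) [Group F] [Finite F] [MulAction F Z] [ContinuousConstSMul F Z]
    (𝒰 : Set (Set Z)) (hUfin : 𝒰.Finite)
    (hUopen : ∀ U ∈ 𝒰, IsOpen U)
    (hUFin : ∀ U ∈ 𝒰, IsFinSubset F U)
    (hUinv : ∀ (g : F), ∀ U ∈ 𝒰, g • U ∈ 𝒰)
    (Udd : Set Z → Set Z)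
    (hUdd : ∀ U ∈ 𝒰, IsOpen (Udd U) ∧ Udd U ⊆ U ∧ closure (Udd U) ⊆ U) :
    ∃ Up : Set Z → Set Z,
      (∀ U ∈ 𝒰, IsOpen (Up U) ∧
        Udd U ⊆ closure (Udd U) ∧ closure (Udd U) ⊆ Up U ∧
        Up U ⊆ closure (Up U) ∧ closure (Up U) ⊆ U) ∧
      (∀ 𝒰₀ ⊆ 𝒰, (n + 1) * Nat.card F < 𝒰₀.ncard →
        (⋂ U ∈ 𝒰₀, frontier (Up U)) = ∅) ∧
      (∀ (g : F), ∀ U ∈ 𝒰, Up (g • U) = g • Up U) := by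
  classical
  letI : MetricSpace Z := TopologicalSpace.metrizableSpaceMetric Z
  letI : Fintype F := Fintype.ofFinite F
  -- orbit representatives
  set rep : Set Z → Set Z := fun U => orbRep F U with hrep
  have hrep_orbit : ∀ U : Set Z, ∃ g : F, g • U = rep U := fun U => orbRep_exists F U
  have hrep_smul : ∀ (g : F) (U : Set Z), rep (g • U) = rep U := fun g U => orbRep_smul F g U
  have hrep_mem : ∀ U ∈ 𝒰, rep U ∈ 𝒰 := by
    intro U hU
    obtain ⟨g, hg⟩ := hrep_orbit U
    rw [← hg]
    exact hUinv g U hU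
  -- the invariant core and hull of an orbit
  set CC : Set Z → Set Z := fun U => ⋃ g : F, ⋃ h : F, g • closure (Udd (h • U)) with hCC
  set EE : Set Z → Set Z := fun U => ⋃ g : F, g • U with hEE
  have hCC_closed : ∀ U, IsClosed (CC U) := fun U =>
    isClosed_iUnion_of_finite fun g => isClosed_iUnion_of_finite fun h => isClosed_closure.smul g
  have hEE_open : ∀ U ∈ 𝒰, IsOpen (EE U) := fun U hU => isOpen_iUnion fun g => (hUopen U hU).smul g
  have hCC_sub_EE : ∀ U ∈ 𝒰, CC U ⊆ EE U := by
    intro U hU x hx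
    simp only [hCC, Set.mem_iUnion] at hx
    obtain ⟨g, h, hx⟩ := hx
    have h1 : closure (Udd (h • U)) ⊆ h • U := (hUdd (h • U) (hUinv h U hU)).2.2
    have h2 : g • closure (Udd (h • U)) ⊆ (g * h) • U := by
      rw [mul_smul]
      exact Set.smul_set_mono h1
    simp only [hEE, Set.mem_iUnion]
    exact ⟨g * h, h2 hx⟩
  have hCC_inv : ∀ (g : F) (U : Set Z), g • CC U = CC U := by
    intro g U
    simp only [hCC]
    rw [Set.smul_set_iUnion]
    have h1 : ∀ g' : F, g • ⋃ h : F, g' • closure (Udd (h • U))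
        = ⋃ h : F, (g * g') • closure (Udd (h • U)) := by
      intro g'
      rw [Set.smul_set_iUnion]
      exact Set.iUnion_congr fun h => (mul_smul g g' _).symm
    rw [Set.iUnion_congr h1]
    exact iUnion_mul_left (fun g' => ⋃ h : F, g' • closure (Udd (h • U))) g
  have hCC_orbit : ∀ (k : F) (U : Set Z), CC (k • U) = CC U := by
    intro k U
    simp only [hCC]
    refine Set.iUnion_congr fun g => ?_
    have h1 : ∀ h : F, g • closure (Udd (h • k • U)) = g • closure (Udd ((h * k) • U)) := by
      intro h
      rw [mul_smul]
    rw [Set.iUnion_congr h1]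
    exact iUnion_mul_right (fun h => g • closure (Udd (h • U))) k
  have hEE_inv : ∀ (g : F) (U : Set Z), g • EE U = EE U := by
    intro g U
    simp only [hEE]
    rw [Set.smul_set_iUnion]
    have h1 : ∀ g' : F, g • g' • U = (g * g') • U := fun g' => (mul_smul g g' U).symm
    rw [Set.iUnion_congr h1]
    exact iUnion_mul_left (fun g' => g' • U) g
  have hEE_orbit : ∀ (k : F) (U : Set Z), EE (k • U) = EE U := by
    intro k U
    simp only [hEE]
    have h1 : ∀ g : F, g • k • U = (g * k) • U := fun g => (mul_smul g k U).symm
    rw [Set.iUnion_congr h1]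
    exact iUnion_mul_right (fun g => g • U) k
  have hUdd_sub_CC : ∀ U : Set Z, closure (Udd U) ⊆ CC U := by
    intro U x hx
    simp only [hCC, Set.mem_iUnion]
    exact ⟨1, 1, by simpa using hx⟩
  have hEcapcl : ∀ U ∈ 𝒰, EE U ∩ closure U ⊆ U := by
    intro U hU x hx
    obtain ⟨hx1, hx2⟩ := hx
    simp only [hEE, Set.mem_iUnion] at hx1
    obtain ⟨g, hg⟩ := hx1
    by_cases hgu : g • U = U
    · rwa [hgu] at hg
    · exfalso
      obtain ⟨z, hz⟩ := mem_closure_iff.mp hx2 (g • U) ((hUopen U hU).smul g) hg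
      exact hgu ((hUFin U hU).2 g ⟨z, hz.1, hz.2⟩)
  -- finite set of representatives
  set 𝒰fin := hUfin.toFinset with h𝒰fin
  set ℛ : Finset (Set Z) := 𝒰fin.image rep with hℛ
  have hℛ_mem : ∀ R ∈ ℛ, R ∈ 𝒰 := by
    intro R hR
    simp only [hℛ, Finset.mem_image] at hR
    obtain ⟨U, hU, hUR⟩ := hR
    rw [h𝒰fin, Set.Finite.mem_toFinset] at hU
    exact hUR ▸ hrep_mem U hU
  have hrep_in_ℛ : ∀ U ∈ 𝒰, rep U ∈ ℛ := by
    intro U hU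
    simp only [hℛ, Finset.mem_image]
    exact ⟨U, by rw [h𝒰fin, Set.Finite.mem_toFinset]; exact hU, rfl⟩
  -- the adapted cover
  set G : Z → Set Z := fun x => (⋂ R ∈ ℛ, if x ∈ EE R then EE R else Set.univ) ∩
      (⋂ R ∈ ℛ, if x ∈ CC R then Set.univ else (CC R)ᶜ) with hG
  have hGopen : ∀ x, IsOpen (G x) := by
    intro x
    refine IsOpen.inter (isOpen_biInter_finset fun R hR => ?_)
      (isOpen_biInter_finset fun R hR => ?_)
    · split_ifs
      exacts [hEE_open R (hℛ_mem R hR), isOpen_univ]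
    · split_ifs
      exacts [isOpen_univ, (hCC_closed R).isOpen_compl]
  have hGmem : ∀ x, x ∈ G x := by
    intro x
    constructor
    · refine Set.mem_iInter₂.mpr fun R hR => ?_
      split_ifs with h
      exacts [h, Set.mem_univ x]
    · refine Set.mem_iInter₂.mpr fun R hR => ?_
      split_ifs with h
      exacts [Set.mem_univ x, h]
  obtain ⟨Wfam, hWopen, hWcover, hWref, hWdim⟩ := hdim {V | ∃ x, V = G x}
    (by rintro V ⟨x, rfl⟩; exact hGopen x)
    (by
      ext z
      simp only [Set.mem_sUnion, Set.mem_univ, iff_true]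
      exact ⟨G z, ⟨z, rfl⟩, hGmem z⟩)
  have hsubcov : Set.univ ⊆ ⋃ V : ↥Wfam, (V : Set Z) := by
    rw [← Set.sUnion_eq_iUnion, hWcover]
  obtain ⟨tt, htt⟩ := isCompact_univ.elim_finite_subcover (fun V : ↥Wfam => (V : Set Z))
    (fun V => hWopen V V.2) hsubcov
  set 𝒲 : Finset (Set Z) := tt.image Subtype.val with h𝒲
  have h𝒲mem : ∀ W ∈ 𝒲, W ∈ Wfam := by
    intro W hW
    simp only [h𝒲, Finset.mem_image] at hW
    obtain ⟨V, _, rfl⟩ := hW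
    exact V.2
  have h𝒲cover : ∀ z : Z, ∃ W ∈ 𝒲, z ∈ W := by
    intro z
    have h1 := htt (Set.mem_univ z)
    simp only [Set.mem_iUnion] at h1
    obtain ⟨V, hV, hz⟩ := h1
    refine ⟨V, ?_, hz⟩
    simp only [h𝒲, Finset.mem_image]
    exact ⟨V, hV, rfl⟩
  have horder : ∀ z : Z, (𝒲.filter (fun W => z ∈ W)).card ≤ n + 1 := by
    intro z
    have h1 := (hWdim z).1
    have h2 := (hWdim z).2
    have hsub2 : ↑(𝒲.filter fun W => z ∈ W) ⊆ {V | V ∈ Wfam ∧ z ∈ V} := by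
      intro W hW
      simp only [Finset.coe_filter, Set.mem_setOf_eq] at hW ⊢
      exact ⟨h𝒲mem W hW.1, hW.2⟩
    calc (𝒲.filter fun W => z ∈ W).card
        = (↑(𝒲.filter fun W => z ∈ W) : Set (Set Z)).ncard := (Set.ncard_coe_finset _).symm
      _ ≤ {V | V ∈ Wfam ∧ z ∈ V}.ncard := Set.ncard_le_ncard hsub2 h1
      _ ≤ n + 1 := h2
  have hWG : ∀ W ∈ 𝒲, ∀ R ∈ ℛ, (W ∩ CC R).Nonempty → W ⊆ EE R := by
    intro W hW R hR hWC
    obtain ⟨V', hV', hWV'⟩ := hWref W (h𝒲mem W hW)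
    obtain ⟨x, rfl⟩ := hV'
    obtain ⟨z, hz1, hz2⟩ := hWC
    by_cases hx : x ∈ CC R
    · have hxE : x ∈ EE R := hCC_sub_EE R (hℛ_mem R hR) hx
      intro w hw
      have h3 := Set.mem_iInter₂.mp (hWV' hw).1 R hR
      rwa [if_pos hxE] at h3
    · exfalso
      have h3 := Set.mem_iInter₂.mp (hWV' hz1).2 R hR
      rw [if_neg hx] at h3
      exact h3 hz2
  -- partition-of-unity functions
  set T : Z → ℝ := fun x => ∑ W ∈ 𝒲, pou W x with hT
  have hTpos : ∀ x, 0 < T x := by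
    intro x
    obtain ⟨W, hW, hxW⟩ := h𝒲cover x
    exact Finset.sum_pos' (fun W' _ => pou_nonneg)
      ⟨W, hW, pou_pos (hWopen W (h𝒲mem W hW)) hxW⟩
  set fB : Set Z → Z → ℝ := fun R x =>
      (∑ W ∈ 𝒲, Set.indicator {W' | (W' ∩ CC R).Nonempty} (fun W' => pou W' x) W) / T x with hfB
  have hfBcont : ∀ R, Continuous (fB R) := by
    intro R
    refine Continuous.div ?_ (by simpa [hT] using continuous_finset_sum 𝒲 fun W _ => pou_continuous W)
      (fun x => (hTpos x).ne')
    refine continuous_finset_sum _ fun W _ => ?_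
    by_cases h : (W ∩ CC R).Nonempty
    · have h1 : ∀ x : Z, Set.indicator {W' | (W' ∩ CC R).Nonempty} (fun W' => pou W' x) W
          = pou W x := fun x => ind_mem (fun W' => (W' ∩ CC R).Nonempty) _ h
      simpa only [h1] using pou_continuous W
    · have h1 : ∀ x : Z, Set.indicator {W' | (W' ∩ CC R).Nonempty} (fun W' => pou W' x) W
          = 0 := fun x => ind_not_mem (fun W' => (W' ∩ CC R).Nonempty) _ h
      simpa only [h1] using continuous_const
  have hfB_one : ∀ (R : Set Z) (x : Z), x ∈ CC R → fB R x = 1 := by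
    intro R x hx
    have hnum : (∑ W ∈ 𝒲, Set.indicator {W' | (W' ∩ CC R).Nonempty} (fun W' => pou W' x) W)
        = T x := by
      rw [hT]
      refine Finset.sum_congr rfl fun W hW => ?_
      by_cases hmem : (W ∩ CC R).Nonempty
      · exact ind_mem (fun W' => (W' ∩ CC R).Nonempty) _ hmem
      · rw [ind_not_mem (fun W' => (W' ∩ CC R).Nonempty) _ hmem]
        have hxW : x ∉ W := by
          intro hxW
          exact hmem ⟨x, hxW, hx⟩
        rw [pou_eq_zero hxW]
    simp only [hfB]
    rw [hnum, div_self (hTpos x).ne']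
  have hfB_zero : ∀ R ∈ ℛ, ∀ x : Z, x ∉ EE R → fB R x = 0 := by
    intro R hR x hx
    have hnum : (∑ W ∈ 𝒲, Set.indicator {W' | (W' ∩ CC R).Nonempty} (fun W' => pou W' x) W)
        = 0 := by
      refine Finset.sum_eq_zero fun W hW => ?_
      by_cases hmem : (W ∩ CC R).Nonempty
      · rw [ind_mem (fun W' => (W' ∩ CC R).Nonempty) _ hmem]
        have hxW : x ∉ W := fun hxW => hx (hWG W hW R hR hmem hxW)
        exact pou_eq_zero hxW
      · exact ind_not_mem (fun W' => (W' ∩ CC R).Nonempty) _ hmem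
    simp only [hfB]
    rw [hnum, zero_div]
  -- generic levels
  obtain ⟨t, ht1, ht2⟩ := exists_generic_levels 𝒲 ℛ (fun W R => (W ∩ CC R).Nonempty) n
  -- the walls
  set Q0 : Set Z → Set Z := fun R => {x | t R < fB R x} with hQ0
  set Q : Set Z → Set Z := fun R => ⋂ g : F, g • Q0 R with hQ
  have hQ0open : ∀ R, IsOpen (Q0 R) := fun R => isOpen_lt continuous_const (hfBcont R)
  have hQopen : ∀ R, IsOpen (Q R) := fun R => isOpen_iInter_of_finite fun g => (hQ0open R).smul g
  have hQ0cl : ∀ R, closure (Q0 R) ⊆ {x | t R ≤ fB R x} := fun R =>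
    closure_lt_subset_le continuous_const (hfBcont R)
  have hQ0subE : ∀ R ∈ ℛ, closure (Q0 R) ⊆ EE R := by
    intro R hR x hx
    have h1 := hQ0cl R hx
    simp only [Set.mem_setOf_eq] at h1
    by_contra hxE
    rw [hfB_zero R hR x hxE] at h1
    exact absurd h1 (not_le.mpr (ht1 R hR).1)
  have hCsubQ0 : ∀ R ∈ ℛ, CC R ⊆ Q0 R := by
    intro R hR x hx
    show t R < fB R x
    rw [hfB_one R x hx]
    exact (ht1 R hR).2
  have hCsubQ : ∀ R ∈ ℛ, CC R ⊆ Q R := by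
    intro R hR x hx
    simp only [hQ, Set.mem_iInter]
    intro g
    rw [Set.mem_smul_set_iff_inv_smul_mem]
    refine hCsubQ0 R hR ?_
    rw [← hCC_inv g⁻¹ R]
    exact Set.smul_mem_smul_set hx
  have hQsubQ0 : ∀ R, Q R ⊆ Q0 R := by
    intro R x hx
    simp only [hQ, Set.mem_iInter] at hx
    have h1 := hx 1
    rwa [one_smul] at h1
  have hQinv : ∀ (g : F) (R : Set Z), g • Q R = Q R := by
    intro g R
    ext x
    rw [Set.mem_smul_set_iff_inv_smul_mem]
    simp only [hQ, Set.mem_iInter]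
    constructor
    · intro hx h
      have h1 := hx (g⁻¹ * h)
      rw [Set.mem_smul_set_iff_inv_smul_mem, smul_smul] at h1
      rw [Set.mem_smul_set_iff_inv_smul_mem]
      convert h1 using 2
      group
    · intro hx h
      have h1 := hx (g * h)
      rw [Set.mem_smul_set_iff_inv_smul_mem] at h1
      rw [Set.mem_smul_set_iff_inv_smul_mem, smul_smul]
      convert h1 using 2
      group
  -- definition of the thickenings
  set Up : Set Z → Set Z := fun U => Q (rep U) ∩ U with hUp
  have hUp_cl_sub : ∀ U ∈ 𝒰, closure (Up U) ⊆ U := by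
    intro U hU x hx
    have h1 : closure (Up U) ⊆ closure (Q0 (rep U)) :=
      closure_mono (Set.Subset.trans Set.inter_subset_left (hQsubQ0 _))
    have h2 : closure (Q0 (rep U)) ⊆ EE (rep U) := hQ0subE _ (hrep_in_ℛ U hU)
    have h3 : EE (rep U) = EE U := by
      obtain ⟨g, hg⟩ := hrep_orbit U
      rw [← hg, hEE_orbit]
    have h4 : closure (Up U) ⊆ closure U := closure_mono Set.inter_subset_right
    exact hEcapcl U hU ⟨h3 ▸ h2 (h1 hx), h4 hx⟩
  have hUp_dd : ∀ U ∈ 𝒰, closure (Udd U) ⊆ Up U := by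
    intro U hU
    have h1 : closure (Udd U) ⊆ CC U := hUdd_sub_CC U
    have h2 : CC U = CC (rep U) := by
      obtain ⟨g, hg⟩ := hrep_orbit U
      rw [← hg, hCC_orbit]
    have h3 : CC (rep U) ⊆ Q (rep U) := hCsubQ _ (hrep_in_ℛ U hU)
    exact fun x hx => ⟨h3 (h2 ▸ h1 hx), (hUdd U hU).2.2 hx⟩
  have hUp_equiv : ∀ (g : F) (U : Set Z), Up (g • U) = g • Up U := by
    intro g U
    simp only [hUp]
    rw [hrep_smul g U, Set.smul_set_inter, hQinv g (rep U)]
  refine ⟨Up, ?_, ?_, fun g U _ => hUp_equiv g U⟩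
  · intro U hU
    exact ⟨(hQopen _).inter (hUopen U hU), subset_closure, hUp_dd U hU, subset_closure,
      hUp_cl_sub U hU⟩
  intro 𝒰₀ h₀ hcard
  rw [Set.eq_empty_iff_forall_notMem]
  intro x hx
  have hfr : ∀ U ∈ 𝒰₀, x ∈ frontier (Up U) := fun U hU => Set.mem_iInter₂.mp hx U hU
  have hxdata : ∀ U ∈ 𝒰₀, x ∈ U ∧ ∃ g : F, fB (rep U) (g⁻¹ • x) = t (rep U) := by
    intro U hU
    have hU𝒰 := h₀ hU
    have h1 := hfr U hU
    have hopen : IsOpen (Up U) := (hQopen _).inter (hUopen U hU𝒰)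
    rw [hopen.frontier_eq] at h1
    obtain ⟨hcl, hnot⟩ := h1
    have hxU : x ∈ U := hUp_cl_sub U hU𝒰 hcl
    have hxnotQ : x ∉ Q (rep U) := fun hq => hnot ⟨hq, hxU⟩
    have hex : ∃ g : F, x ∉ g • Q0 (rep U) := by
      by_contra hcon
      push_neg at hcon
      apply hxnotQ
      simp only [hQ, Set.mem_iInter]
      exact hcon
    obtain ⟨g, hg⟩ := hex
    have hxcl2 : x ∈ closure (g • Q0 (rep U)) := by
      refine closure_mono ?_ hcl
      intro w hw
      have h5 : w ∈ Q (rep U) := hw.1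
      simp only [hQ, Set.mem_iInter] at h5
      exact h5 g
    rw [closure_smul, Set.mem_smul_set_iff_inv_smul_mem] at hxcl2
    rw [Set.mem_smul_set_iff_inv_smul_mem] at hg
    have hle := hQ0cl (rep U) hxcl2
    simp only [Set.mem_setOf_eq] at hle
    have hnlt : ¬ (t (rep U) < fB (rep U) (g⁻¹ • x)) := by
      intro hlt
      exact hg hlt
    exact ⟨hxU, g, le_antisymm (not_lt.mp hnlt) hle⟩
  set A : Finset (Set Z) := (hUfin.subset h₀).toFinset with hA
  have hAmem : ∀ U : Set Z, U ∈ A ↔ U ∈ 𝒰₀ := fun U => Set.Finite.mem_toFinset _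
  have hAcard : (n + 1) * Fintype.card F < A.card := by
    have h1 : 𝒰₀.ncard = A.card := Set.ncard_eq_toFinset_card 𝒰₀ (hUfin.subset h₀)
    rw [← h1]
    rwa [Nat.card_eq_fintype_card] at hcard
  set σ : Set Z → F := fun U =>
    if h : ∃ g : F, fB (rep U) (g⁻¹ • x) = t (rep U) then h.choose else 1 with hσ
  have hσspec : ∀ U ∈ A, fB (rep U) ((σ U)⁻¹ • x) = t (rep U) := by
    intro U hU
    have hex := (hxdata U ((hAmem U).mp hU)).2
    simp only [hσ]
    rw [dif_pos hex]
    exact hex.choose_spec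
  obtain ⟨g, hgcard⟩ : ∃ g : F, n + 2 ≤ (A.filter fun U => σ U = g).card := by
    by_contra hcon
    push_neg at hcon
    have h1 : A.card = ∑ g : F, (A.filter fun U => σ U = g).card :=
      Finset.card_eq_sum_card_fiberwise (fun U _ => Finset.mem_univ (σ U))
    have h2 : A.card ≤ ∑ _g : F, (n + 1) := by
      rw [h1]
      exact Finset.sum_le_sum fun g _ => Nat.lt_succ_iff.mp (hcon g)
    simp only [Finset.sum_const, Finset.card_univ, smul_eq_mul] at h2
    rw [mul_comm] at h2
    omega
  set B := A.filter (fun U => σ U = g) with hB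
  set z := g⁻¹ • x with hz
  have hBz : ∀ U ∈ B, fB (rep U) z = t (rep U) := by
    intro U hU
    rw [hB, Finset.mem_filter] at hU
    have h1 := hσspec U hU.1
    rwa [hU.2] at h1
  have hB𝒰₀ : ∀ U ∈ B, U ∈ 𝒰₀ := by
    intro U hU
    rw [hB, Finset.mem_filter] at hU
    exact (hAmem U).mp hU.1
  have hxmem : ∀ U ∈ B, x ∈ U := fun U hU => (hxdata U (hB𝒰₀ U hU)).1
  have hrepinj : Set.InjOn rep ↑B := by
    intro U hU V hV hUV
    rw [Finset.mem_coe] at hU hV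
    obtain ⟨g₁, hg₁⟩ := hrep_orbit U
    obtain ⟨g₂, hg₂⟩ := hrep_orbit V
    have hk : (g₂⁻¹ * g₁) • U = V := by
      rw [mul_smul, hg₁, hUV, ← hg₂, inv_smul_smul]
    have hU𝒰 : U ∈ 𝒰 := h₀ (hB𝒰₀ U hU)
    have h5 := (hUFin U hU𝒰).2 (g₂⁻¹ * g₁) ⟨x, by rw [hk]; exact hxmem V hV, hxmem U hU⟩
    rw [← hk, h5]
  set I₀ := B.image rep with hI₀
  have hI₀card : n + 2 ≤ I₀.card := by
    rw [hI₀, Finset.card_image_of_injOn hrepinj]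
    exact hgcard
  obtain ⟨I, hIsub, hIcard⟩ := Finset.exists_subset_card_eq hI₀card
  have hIℛ : I ⊆ ℛ := by
    intro R hR
    have h1 := hIsub hR
    rw [hI₀, Finset.mem_image] at h1
    obtain ⟨U, hU, rfl⟩ := h1
    exact hrep_in_ℛ U (h₀ (hB𝒰₀ U hU))
  have hIz : ∀ R ∈ I, fB R z = t R := by
    intro R hR
    have h1 := hIsub hR
    rw [hI₀, Finset.mem_image] at h1
    obtain ⟨U, hU, rfl⟩ := h1
    exact hBz U hU
  set P := 𝒲.filter (fun W => z ∈ W) with hP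
  have hPsub : P ⊆ 𝒲 := Finset.filter_subset _ _
  have hPcard : P.card ≤ n + 1 := horder z
  set y : Set Z → ℝ := fun W => pou W z / T z with hy
  have hPz : ∀ W ∈ 𝒲, W ∉ P → z ∉ W := by
    intro W hW hWP hzW
    exact hWP (by rw [hP, Finset.mem_filter]; exact ⟨hW, hzW⟩)
  have hysum : ∑ W ∈ P, y W = 1 := by
    simp only [hy]
    rw [← Finset.sum_div]
    have h1 : ∑ W ∈ P, pou W z = T z := by
      rw [hT]
      exact Finset.sum_subset hPsub fun W hW hWP => pou_eq_zero (hPz W hW hWP)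
    rw [h1, div_self (hTpos z).ne']
  have hIeq : ∀ R ∈ I, (∑ W ∈ P, genInd (fun W R => (W ∩ CC R).Nonempty) R y W) = t R := by
    intro R hR
    rw [← hIz R hR]
    have h1 : ∀ W : Set Z, genInd (fun W R => (W ∩ CC R).Nonempty) R y W
        = (Set.indicator {W' | (W' ∩ CC R).Nonempty} (fun W' => pou W' z) W) / T z := by
      intro W
      unfold genInd
      by_cases hc : (W ∩ CC R).Nonempty
      · rw [ind_mem (fun W' => (W' ∩ CC R).Nonempty) _ hc, ind_mem (fun W' => (W' ∩ CC R).Nonempty) _ hc]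
      · rw [ind_not_mem (fun W' => (W' ∩ CC R).Nonempty) _ hc, ind_not_mem (fun W' => (W' ∩ CC R).Nonempty) _ hc, zero_div]
    rw [Finset.sum_congr rfl fun W _ => h1 W, ← Finset.sum_div]
    simp only [hfB]
    congr 1
    refine Finset.sum_subset hPsub fun W hW hWP => ?_
    by_cases hc : (W ∩ CC R).Nonempty
    · rw [ind_mem (fun W' => (W' ∩ CC R).Nonempty) _ hc]
      exact pou_eq_zero (hPz W hW hWP)
    · exact ind_not_mem (fun W' => (W' ∩ CC R).Nonempty) _ hc
  obtain ⟨R, hRI, hne⟩ := ht2 I P hIℛ hIcard hPsub hPcard y hysum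
  exact hne (hIeq R hRI)
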